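/- Let a : ℝ → (0,∞) be continuous and H : ℝ × ℝ → ℝ continuous. Suppose 𝓢 is a nonempty compact (in C(ℝ) with local uniform topology) family of C¹ solutions of a(x)f' + H(x,f) = λ on ℝ. Then the pointwise infimum f̲(x) := inf_{f∈𝓢} f(x) and supremum f̄(x) := sup_{f∈𝓢} f(x) are themselves C¹ solutions of the same ODE. -/

import Mathlib

lemma existsMinAt (S : Set C(ℝ, ℝ)) (hS_ne : S.Nonempty) (hS_cpt : IsCompact S) (x : ℝ) :
    ∃ f ∈ S, ∀ g ∈ S, (f : C(ℝ, ℝ)) x ≤ g x := by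
  have hco : Continuous fun f : C(ℝ, ℝ) => f x := ContinuousEvalConst.continuous_eval_const x
  obtain ⟨m, hm⟩ := (hS_cpt.image hco).exists_isLeast (hS_ne.image _)
  obtain ⟨f, hfS, rfl⟩ := hm.1
  exact ⟨f, hfS, fun g hg => hm.2 ⟨g, hg, rfl⟩⟩

lemma iInfEqOfMin {S : Set C(ℝ, ℝ)} {f : C(ℝ, ℝ)} {x : ℝ} (hf : f ∈ S)
    (hm : ∀ g ∈ S, f x ≤ g x) : (⨅ g : S, (g : C(ℝ, ℝ)) x) = f x := by
  have : Nonempty S := ⟨⟨f, hf⟩⟩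
  refine le_antisymm (ciInf_le (show BddBelow (Set.range fun g : S => (g : C(ℝ, ℝ)) x) from ⟨f x, ?_⟩) ⟨f, hf⟩) (le_ciInf fun g => hm g g.2)
  rintro _ ⟨g, rfl⟩; exact hm g g.2

lemma mvtAux {f : ℝ → ℝ} (hf : ContDiff ℝ 1 f) (x h : ℝ) (hh : h ≠ 0) :
    ∃ ξ ∈ Set.uIcc x (x + h), |ξ - x| ≤ |h| ∧ f (x + h) - f x = deriv f ξ * h := by
  have hd : ∀ y, HasDerivAt f (deriv f y) y := fun y => (hf.differentiable one_ne_zero y).hasDerivAt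
  rcases lt_or_gt_of_ne hh with h0 | h0
  · have hlt : x + h < x := by linarith
    obtain ⟨c, hc, hc'⟩ := exists_hasDerivAt_eq_slope f (deriv f) hlt
      hf.continuous.continuousOn (fun y _ => hd y)
    refine ⟨c, ?_, ?_, ?_⟩
    · rw [Set.uIcc_comm, Set.uIcc_of_le hlt.le]; exact Set.Ioo_subset_Icc_self hc
    · rw [abs_of_neg h0]; rw [Set.mem_Ioo] at hc
      rw [abs_le]; constructor <;> linarith [hc.1, hc.2]
    · rw [hc', show x - (x + h) = -h by ring, div_neg, neg_mul, div_mul_cancel₀ _ hh]; ring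
  · have hlt : x < x + h := by linarith
    obtain ⟨c, hc, hc'⟩ := exists_hasDerivAt_eq_slope f (deriv f) hlt
      hf.continuous.continuousOn (fun y _ => hd y)
    refine ⟨c, ?_, ?_, ?_⟩
    · rw [Set.uIcc_of_le hlt.le]; exact Set.Ioo_subset_Icc_self hc
    · rw [abs_of_pos h0]; rw [Set.mem_Ioo] at hc
      rw [abs_le]; constructor <;> linarith [hc.1, hc.2]
    · rw [hc', show x + h - x = h by ring]; field_simp

set_option maxHeartbeats 2000000 in
lemma infSol (a : ℝ → ℝ) (H : ℝ → ℝ → ℝ) (lam : ℝ) (S : Set C(ℝ, ℝ))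
    (ha_cont : Continuous a) (ha_pos : ∀ x, 0 < a x)
    (hH_cont : Continuous fun q : ℝ × ℝ => H q.1 q.2)
    (hS_ne : S.Nonempty) (hS_cpt : IsCompact S)
    (hS_sol : ∀ f ∈ S, ContDiff ℝ 1 (f : ℝ → ℝ) ∧
      ∀ x, a x * deriv (f : ℝ → ℝ) x + H x (f x) = lam) :
    ContDiff ℝ 1 (fun x => ⨅ f : S, (f : C(ℝ, ℝ)) x) ∧
      ∀ x, a x * deriv (fun y => ⨅ f : S, (f : C(ℝ, ℝ)) y) x
        + H x (⨅ f : S, (f : C(ℝ, ℝ)) x) = lam := by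
  set F : ℝ → ℝ := fun x => ⨅ f : S, (f : C(ℝ, ℝ)) x with hFdef
  set φ : ℝ → ℝ → ℝ := fun t y => (lam - H t y) / a t with hφdef
  have hφc : Continuous fun q : ℝ × ℝ => φ q.1 q.2 :=
    (continuous_const.sub hH_cont).div (ha_cont.comp continuous_fst)
      fun q => (ha_pos q.1).ne'
  have hder : ∀ f ∈ S, ∀ t, deriv (f : ℝ → ℝ) t = φ t (f t) := by
    intro f hf t
    have h1 := (hS_sol f hf).2 t
    have h2 := (ha_pos t).ne'
    simp only [hφdef]
    field_simp
    linarith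
  have hFle : ∀ x, ∀ f ∈ S, F x ≤ f x := by
    intro x f hf
    obtain ⟨f₀, hf₀S, hf₀⟩ := existsMinAt S hS_ne hS_cpt x
    rw [show F x = f₀ x from iInfEqOfMin hf₀S hf₀]
    exact hf₀ f hf
  have key : ∀ x, HasDerivAt F (φ x (F x)) x := by
    intro x
    -- uniform derivative bound on [x-1, x+1]
    have hev : Continuous fun p : C(ℝ, ℝ) × ℝ => φ p.2 (p.1 p.2) :=
      hφc.comp ((continuous_snd).prodMk ContinuousEval.continuous_eval)
    obtain ⟨L₀, hL₀⟩ := (hS_cpt.prod (isCompact_Icc (a := x - 1) (b := x + 1))).exists_bound_of_continuousOn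
      hev.continuousOn
    set L := max L₀ 0 with hLdef
    have hL0 : 0 ≤ L := le_max_right _ _
    have hDb : ∀ f ∈ S, ∀ t ∈ Set.Icc (x - 1) (x + 1), |deriv (f : ℝ → ℝ) t| ≤ L := by
      intro f hf t ht
      rw [hder f hf t]
      have := hL₀ (f, t) ⟨hf, ht⟩
      rw [Real.norm_eq_abs] at this
      exact this.trans (le_max_left _ _)
    have hLip : ∀ f ∈ S, ∀ s t : ℝ, s ∈ Set.Icc (x - 1) (x + 1) → t ∈ Set.Icc (x - 1) (x + 1) →
        |(f : ℝ → ℝ) s - f t| ≤ L * |s - t| := by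
      intro f hf s t hs ht
      rcases eq_or_ne s t with rfl | hst
      · simp
      have hst' : s - t ≠ 0 := sub_ne_zero.mpr hst
      obtain ⟨ξ, hξu, hξd, hξe⟩ := mvtAux (hS_sol f hf).1 t (s - t) hst'
      rw [show t + (s - t) = s by ring] at hξu hξe
      have hsub : Set.uIcc t s ⊆ Set.Icc (x - 1) (x + 1) := by
        rw [← Set.uIcc_of_le (show x - 1 ≤ x + 1 by linarith)]
        exact Set.uIcc_subset_uIcc
          (by rw [Set.uIcc_of_le (show x - 1 ≤ x + 1 by linarith)]; exact ht)
          (by rw [Set.uIcc_of_le (show x - 1 ≤ x + 1 by linarith)]; exact hs)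
      have hξI : ξ ∈ Set.Icc (x - 1) (x + 1) := hsub hξu
      rw [hξe, abs_mul]
      exact mul_le_mul_of_nonneg_right (hDb f hf ξ hξI) (abs_nonneg _)
    have hxI : x ∈ Set.Icc (x - 1) (x + 1) := by constructor <;> linarith
    -- ε-δ argument
    rw [hasDerivAt_iff_isLittleO, Asymptotics.isLittleO_iff]
    intro ε hε
    have hφat : ContinuousAt (fun q : ℝ × ℝ => φ q.1 q.2) (x, F x) := hφc.continuousAt
    obtain ⟨δ₀, hδ₀, hball⟩ := Metric.continuousAt_iff.mp hφat ε hε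
    have hball' : ∀ t y : ℝ, |t - x| < δ₀ → |y - F x| < δ₀ → |φ t y - φ x (F x)| < ε := by
      intro t y h1 h2
      have : dist ((t, y) : ℝ × ℝ) (x, F x) < δ₀ := by
        rw [Prod.dist_eq]
        exact max_lt (by rwa [Real.dist_eq]) (by rwa [Real.dist_eq])
      simpa [Real.dist_eq] using hball this
    set δ : ℝ := min 1 (δ₀ / (6 * L + 2)) with hδdef
    have hδpos : 0 < δ := lt_min one_pos (div_pos hδ₀ (by linarith))
    have hδ1 : δ ≤ 1 := min_le_left _ _
    have hδ2 : δ * (6 * L + 2) ≤ δ₀ := by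
      rw [← le_div_iff₀ (by linarith)]
      exact min_le_right _ _
    rw [Metric.eventually_nhds_iff]
    refine ⟨δ, hδpos, ?_⟩
    intro x' hx'
    rcases eq_or_ne x' x with rfl | hne
    · simp
    have hh0 : x' - x ≠ 0 := sub_ne_zero.mpr hne
    have hhδ : |x' - x| < δ := by rwa [Real.dist_eq] at hx'
    have hLδ : 0 ≤ L * δ := mul_nonneg hL0 hδpos.le
    have hmem : ∀ t : ℝ, |t - x| ≤ |x' - x| → t ∈ Set.Icc (x - 1) (x + 1) := by
      intro t ht
      have h1 := abs_le.mp (ht.trans (hhδ.le.trans hδ1))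
      constructor <;> linarith [h1.1, h1.2]
    have hx'I : x' ∈ Set.Icc (x - 1) (x + 1) := hmem x' le_rfl
    -- upper estimate via minimizer at x
    obtain ⟨f₀, hf₀S, hf₀m⟩ := existsMinAt S hS_ne hS_cpt x
    have hf₀x : F x = f₀ x := iInfEqOfMin hf₀S hf₀m
    obtain ⟨ξ₀, hξ₀u, hξ₀d, hξ₀e⟩ := mvtAux (hS_sol f₀ hf₀S).1 x (x' - x) hh0
    rw [show x + (x' - x) = x' by ring] at hξ₀u hξ₀e
    have hξ₀I : ξ₀ ∈ Set.Icc (x - 1) (x + 1) := hmem ξ₀ hξ₀d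
    have h₀lip : |(f₀ : ℝ → ℝ) ξ₀ - f₀ x| ≤ L * |x' - x| :=
      (hLip f₀ hf₀S ξ₀ x hξ₀I hxI).trans (mul_le_mul_of_nonneg_left hξ₀d hL0)
    have hLh : L * |x' - x| ≤ L * δ := mul_le_mul_of_nonneg_left hhδ.le hL0
    have hδδ₀ : δ < δ₀ := by nlinarith
    have hd₀ : |deriv (f₀ : ℝ → ℝ) ξ₀ - φ x (F x)| < ε := by
      rw [hder f₀ hf₀S]
      refine hball' ξ₀ (f₀ ξ₀) (lt_of_le_of_lt hξ₀d (hhδ.trans hδδ₀)) ?_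
      rw [hf₀x]
      calc |(f₀ : ℝ → ℝ) ξ₀ - f₀ x| ≤ L * |x' - x| := h₀lip
        _ ≤ L * δ := hLh
        _ < δ₀ := by nlinarith
    have hup : F x' - F x ≤ φ x (F x) * (x' - x) + ε * |x' - x| := by
      have h1 : F x' ≤ f₀ x' := hFle x' f₀ hf₀S
      have h3 : (deriv (f₀ : ℝ → ℝ) ξ₀ - φ x (F x)) * (x' - x) ≤ ε * |x' - x| := by
        calc (deriv (f₀ : ℝ → ℝ) ξ₀ - φ x (F x)) * (x' - x)
            ≤ |(deriv (f₀ : ℝ → ℝ) ξ₀ - φ x (F x)) * (x' - x)| := le_abs_self _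
          _ = |deriv (f₀ : ℝ → ℝ) ξ₀ - φ x (F x)| * |x' - x| := abs_mul _ _
          _ ≤ ε * |x' - x| := mul_le_mul_of_nonneg_right hd₀.le (abs_nonneg _)
      nlinarith [hξ₀e]
    -- lower estimate via minimizer at x'
    obtain ⟨f₁, hf₁S, hf₁m⟩ := existsMinAt S hS_ne hS_cpt x'
    have hf₁x : F x' = f₁ x' := iInfEqOfMin hf₁S hf₁m
    obtain ⟨ξ₁, hξ₁u, hξ₁d, hξ₁e⟩ := mvtAux (hS_sol f₁ hf₁S).1 x (x' - x) hh0
    rw [show x + (x' - x) = x' by ring] at hξ₁u hξ₁e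
    have hξ₁I : ξ₁ ∈ Set.Icc (x - 1) (x + 1) := hmem ξ₁ hξ₁d
    have hFd : |F x' - F x| ≤ L * |x' - x| := by
      have e0 := abs_le.mp (hLip f₀ hf₀S x' x hx'I hxI)
      have e1 := abs_le.mp (hLip f₁ hf₁S x' x hx'I hxI)
      have e2 := hFle x f₁ hf₁S
      have e3 := hFle x' f₀ hf₀S
      rw [abs_le]
      constructor <;> [nlinarith [e1.1, hf₁x, e2]; nlinarith [e0.2, hf₀x, e3]]
    have hd₁ : |deriv (f₁ : ℝ → ℝ) ξ₁ - φ x (F x)| < ε := by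
      rw [hder f₁ hf₁S]
      refine hball' ξ₁ (f₁ ξ₁) (lt_of_le_of_lt hξ₁d (hhδ.trans hδδ₀)) ?_
      have t1 : |(f₁ : ℝ → ℝ) ξ₁ - f₁ x'| ≤ L * (2 * |x' - x|) := by
        have := hLip f₁ hf₁S ξ₁ x' hξ₁I hx'I
        refine this.trans (mul_le_mul_of_nonneg_left ?_ hL0)
        calc |ξ₁ - x'| ≤ |ξ₁ - x| + |x - x'| := abs_sub_le _ _ _
          _ ≤ |x' - x| + |x' - x| := by
              rw [abs_sub_comm x x']
              exact add_le_add hξ₁d le_rfl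
          _ = 2 * |x' - x| := by ring
      have t2 : |(f₁ : ℝ → ℝ) ξ₁ - F x| ≤ 3 * L * |x' - x| := by
        calc |(f₁ : ℝ → ℝ) ξ₁ - F x| ≤ |(f₁ : ℝ → ℝ) ξ₁ - f₁ x'| + |F x' - F x| := by
              rw [hf₁x]
              exact abs_sub_le _ _ _
          _ ≤ L * (2 * |x' - x|) + L * |x' - x| := add_le_add t1 hFd
          _ = 3 * L * |x' - x| := by ring
      calc |(f₁ : ℝ → ℝ) ξ₁ - F x| ≤ 3 * L * |x' - x| := t2
        _ < δ₀ := by nlinarith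
    have hlow : φ x (F x) * (x' - x) - ε * |x' - x| ≤ F x' - F x := by
      have h1 : F x ≤ f₁ x := hFle x f₁ hf₁S
      have h3 : -((deriv (f₁ : ℝ → ℝ) ξ₁ - φ x (F x)) * (x' - x)) ≤ ε * |x' - x| := by
        calc -((deriv (f₁ : ℝ → ℝ) ξ₁ - φ x (F x)) * (x' - x))
            ≤ |(deriv (f₁ : ℝ → ℝ) ξ₁ - φ x (F x)) * (x' - x)| := neg_le_abs _
          _ = |deriv (f₁ : ℝ → ℝ) ξ₁ - φ x (F x)| * |x' - x| := abs_mul _ _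
          _ ≤ ε * |x' - x| := mul_le_mul_of_nonneg_right hd₁.le (abs_nonneg _)
      nlinarith [hξ₁e, hf₁x]
    have hfin : |F x' - F x - (x' - x) * φ x (F x)| ≤ ε * |x' - x| := by
      rw [abs_le]
      constructor <;> nlinarith [hup, hlow]
    simpa [Real.norm_eq_abs, smul_eq_mul, mul_comm] using hfin
  -- conclude from key
  have hdF : deriv F = fun x => φ x (F x) := funext fun x => (key x).deriv
  have hFdiff : Differentiable ℝ F := fun x => (key x).differentiableAt
  have hFcont : Continuous F := hFdiff.continuous
  have hgc : Continuous fun x => φ x (F x) :=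
    hφc.comp (continuous_id.prodMk hFcont)
  constructor
  · rw [contDiff_one_iff_deriv]
    exact ⟨hFdiff, by rw [hdF]; exact hgc⟩
  · intro x
    have hFx : (⨅ f : S, (f : C(ℝ, ℝ)) x) = F x := rfl
    rw [hFx, hdF]
    simp only [hφdef]
    field_simp
    rw [mul_div_cancel_left₀ _ (ha_pos x).ne']
    ring

lemma iSupEqOfMax {S : Set C(ℝ, ℝ)} {f : C(ℝ, ℝ)} {x : ℝ} (hf : f ∈ S)
    (hm : ∀ g ∈ S, (g : C(ℝ, ℝ)) x ≤ f x) : (⨆ g : S, (g : C(ℝ, ℝ)) x) = f x := by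
  have : Nonempty S := ⟨⟨f, hf⟩⟩
  have hbdd : BddAbove (Set.range fun g : S => (g : C(ℝ, ℝ)) x) := by
    refine ⟨f x, ?_⟩; rintro _ ⟨g, rfl⟩; exact hm g g.2
  exact le_antisymm (ciSup_le fun g => hm g g.2) (le_ciSup hbdd ⟨f, hf⟩)


/-- Lattice property of compact solution families: if `𝓢` is a nonempty compact
(for the compact-open, i.e. local uniform, topology) family of `C¹` solutions of
`a f' + H(x, f) = λ` on `ℝ`, then the pointwise infimum and supremum over `𝓢`
are themselves `C¹` solutions of the same ODE. -/
theorem compact_family_inf_sup_solution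
    (a : ℝ → ℝ) (H : ℝ → ℝ → ℝ) (lam : ℝ) (S : Set C(ℝ, ℝ))
    (ha_cont : Continuous a) (ha_pos : ∀ x, 0 < a x)
    (hH_cont : Continuous fun q : ℝ × ℝ => H q.1 q.2)
    (hS_ne : S.Nonempty) (hS_cpt : IsCompact S)
    (hS_sol : ∀ f ∈ S, ContDiff ℝ 1 (f : ℝ → ℝ) ∧
      ∀ x, a x * deriv (f : ℝ → ℝ) x + H x (f x) = lam) :
    (ContDiff ℝ 1 (fun x => ⨅ f : S, (f : C(ℝ, ℝ)) x) ∧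
      ∀ x, a x * deriv (fun y => ⨅ f : S, (f : C(ℝ, ℝ)) y) x
        + H x (⨅ f : S, (f : C(ℝ, ℝ)) x) = lam) ∧
    (ContDiff ℝ 1 (fun x => ⨆ f : S, (f : C(ℝ, ℝ)) x) ∧
      ∀ x, a x * deriv (fun y => ⨆ f : S, (f : C(ℝ, ℝ)) y) x
        + H x (⨆ f : S, (f : C(ℝ, ℝ)) x) = lam) := by
  refine ⟨infSol a H lam S ha_cont ha_pos hH_cont hS_ne hS_cpt hS_sol, ?_⟩
  set T : Set C(ℝ, ℝ) := (fun f : C(ℝ, ℝ) => -f) '' S with hTdef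
  have hT_ne : T.Nonempty := hS_ne.image _
  have hT_cpt : IsCompact T := hS_cpt.image continuous_neg
  set H' : ℝ → ℝ → ℝ := fun t y => -H t (-y) with hH'def
  have hH'c : Continuous fun q : ℝ × ℝ => H' q.1 q.2 :=
    (hH_cont.comp (continuous_fst.prodMk continuous_snd.neg)).neg
  have hT_sol : ∀ g ∈ T, ContDiff ℝ 1 (g : ℝ → ℝ) ∧
      ∀ x, a x * deriv (g : ℝ → ℝ) x + H' x (g x) = -lam := by
    rintro g ⟨f, hfS, rfl⟩
    obtain ⟨h1, h2⟩ := hS_sol f hfS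
    have hco : ((-f : C(ℝ, ℝ)) : ℝ → ℝ) = fun y => -(f y) := by ext y; simp
    constructor
    · rw [hco]; exact h1.neg
    · intro x
      rw [hco, deriv.fun_neg]
      have h3 := h2 x
      simp only [hH'def, neg_neg]
      ring_nf
      ring_nf at h3
      linarith
  obtain ⟨hc, hode⟩ := infSol a H' (-lam) T ha_cont ha_pos hH'c hT_ne hT_cpt hT_sol
  have hEq : ∀ x : ℝ, (⨆ f : S, (f : C(ℝ, ℝ)) x) = -(⨅ g : T, (g : C(ℝ, ℝ)) x) := by
    intro x
    obtain ⟨g₀, hg₀T, hg₀m⟩ := existsMinAt T hT_ne hT_cpt x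
    obtain ⟨f₀, hf₀S, rfl⟩ := hg₀T
    have hmax : ∀ f ∈ S, (f : C(ℝ, ℝ)) x ≤ f₀ x := by
      intro f hf
      have := hg₀m (-f) ⟨f, hf, rfl⟩
      simp only [ContinuousMap.neg_apply] at this
      linarith
    rw [iSupEqOfMax hf₀S hmax, iInfEqOfMin (Set.mem_image_of_mem _ hf₀S) hg₀m]
    simp
  simp only [hEq]
  constructor
  · exact hc.neg
  · intro x
    rw [deriv.fun_neg]
    have h4 := hode x
    simp only [hH'def, neg_neg] at h4
    linarith
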